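/- As θ → 0⁺ with s = sin(θ/2), the function I₁(θ) = (α₁+α₂)²/(α₁α₂) has the asymptotic expansion I₁ = −1/2 − (3/2)s + s² + (9/4)s³ − 2s⁴ + O(s⁵). -/

import Mathlib

open Real

set_option maxHeartbeats 2000000 in
/-- asymptotic expansion of `I₁(θ) = (α₁+α₂)²/(α₁α₂)` as
`θ → 0⁺`, with `s = sin(θ/2)`: `I₁ = −1/2 − (3/2)s + s² + (9/4)s³ − 2s⁴ + O(s⁵)`. -/
theorem I1_asymptotic :
    ∃ C > (0 : ℝ), ∃ δ > (0 : ℝ), ∀ θ : ℝ, 0 < θ → θ < δ →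
      |(cos θ / (cos θ - 1) +
            -((cos θ - 1) + sin θ) / (2 * (cos θ - 1) * sin θ)) ^ 2 /
          (cos θ / (cos θ - 1) *
            (-((cos θ - 1) + sin θ) / (2 * (cos θ - 1) * sin θ))) -
        (-1 / 2 - 3 / 2 * sin (θ / 2) + sin (θ / 2) ^ 2 +
          9 / 4 * sin (θ / 2) ^ 3 - 2 * sin (θ / 2) ^ 4)| ≤
      C * sin (θ / 2) ^ 5 := by
  refine ⟨100, by norm_num, 1/10, by norm_num, fun θ hθ hθδ => ?_⟩
  have hpi := Real.pi_gt_three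
  set s := sin (θ / 2) with hs_def
  set w := cos (θ / 2) with hw_def
  have hθ2 : 0 < θ / 2 := by linarith
  have hθ2' : θ / 2 < 1 / 20 := by linarith
  have hs : 0 < s := Real.sin_pos_of_pos_of_lt_pi hθ2 (by linarith)
  have hs' : s < 1 / 20 := lt_trans (Real.sin_lt hθ2) hθ2'
  have hw0 : 0 < w := Real.cos_pos_of_mem_Ioo ⟨by linarith, by linarith⟩
  have hpy : w ^ 2 = 1 - s ^ 2 := by
    have := Real.sin_sq_add_cos_sq (θ / 2); linarith
  have hw : 9/10 < w := by nlinarith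
  have hw1 : w ≤ 1 := Real.cos_le_one _
  have hcos : cos θ = 1 - 2 * s ^ 2 := by
    have h := Real.cos_two_mul (θ / 2)
    rw [show 2 * (θ / 2) = θ by ring, ← hw_def] at h
    rw [h]; linarith [hpy]
  have hsin : sin θ = 2 * s * w := by
    have h := Real.sin_two_mul (θ / 2)
    rw [show 2 * (θ / 2) = θ by ring, ← hw_def, ← hs_def] at h
    rw [h]
  have h12 : (0:ℝ) < 1 - 2 * s ^ 2 := by nlinarith
  have key :
      ((1 - 2*s^2) / ((1 - 2*s^2) - 1) +
          -(((1 - 2*s^2) - 1) + 2*s*w) / (2 * ((1 - 2*s^2) - 1) * (2*s*w))) ^ 2 /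
        ((1 - 2*s^2) / ((1 - 2*s^2) - 1) *
          (-(((1 - 2*s^2) - 1) + 2*s*w) / (2 * ((1 - 2*s^2) - 1) * (2*s*w)))) =
      (-1 / 2 - 3 / 2 * s + s ^ 2 + 9 / 4 * s ^ 3 - 2 * s ^ 4) +
        s^5 * ((18 + 21*w + 2*(9*w - 8 - 8*s*w)*(1 + w)^2) / (4*w*(1 - 2*s^2)*(1 + w)^2)) := by
    have hne1 : (1:ℝ) - 2*s^2 ≠ 0 := ne_of_gt h12
    have hne2 : s ≠ 0 := ne_of_gt hs
    have hne3 : w ≠ 0 := ne_of_gt hw0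
    have hne5 : (1:ℝ) + w ≠ 0 := by positivity
    have hne6 : -(2*s*w) + 2*s^2 ≠ 0 := by intro h; nlinarith
    have hne7 : 1 - 2*s^2 - 1 + 2*s*w ≠ 0 := by intro h; nlinarith
    field_simp
    linear_combination ((48) * s^3 * w^1 + (48) * s^3 * w^2 + (16) * s^4 * w^0 + (80) * s^4 * w^1 +
      (64) * s^4 * w^2 + (-144) * s^5 * w^1 + (-168) * s^5 * w^2 + (16) * s^6 * w^0 +
      (-88) * s^6 * w^1 + (-128) * s^6 * w^2) * hpy
  rw [hcos, hsin, key]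
  rw [show (-1 / 2 - 3 / 2 * s + s ^ 2 + 9 / 4 * s ^ 3 - 2 * s ^ 4) +
        s^5 * ((18 + 21*w + 2*(9*w - 8 - 8*s*w)*(1 + w)^2) / (4*w*(1 - 2*s^2)*(1 + w)^2)) -
      (-1 / 2 - 3 / 2 * s + s ^ 2 + 9 / 4 * s ^ 3 - 2 * s ^ 4) =
      s^5 * ((18 + 21*w + 2*(9*w - 8 - 8*s*w)*(1 + w)^2) / (4*w*(1 - 2*s^2)*(1 + w)^2)) from by ring]
  have hD : (0:ℝ) < 4*w*(1 - 2*s^2)*(1 + w)^2 := by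
    have := mul_pos (mul_pos (by linarith : (0:ℝ) < 4*w) h12)
      (pow_pos (by linarith : (0:ℝ) < 1 + w) 2)
    linarith [this]
  have hQ : |(18 + 21*w + 2*(9*w - 8 - 8*s*w)*(1 + w)^2) / (4*w*(1 - 2*s^2)*(1 + w)^2)| ≤ 100 := by
    have hsw1 : s * w ≤ 1/20 := by nlinarith [mul_le_mul_of_nonneg_left hw1 hs.le]
    have hx1 : 9*w - 8 - 8*(s*w) ≤ 1 := by nlinarith
    have hx2 : -1 ≤ 9*w - 8 - 8*(s*w) := by nlinarith [mul_pos hs hw0]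
    have hp4 : (1 + w)^2 ≤ 4 := by nlinarith
    have hB : (1:ℝ) ≤ (1 + w)^2 := by nlinarith
    have hNup : 18 + 21*w + 2*(9*w - 8 - 8*s*w)*(1 + w)^2 ≤ 47 := by
      nlinarith [mul_nonneg (by linarith : (0:ℝ) ≤ 1 - (9*w - 8 - 8*(s*w))) (sq_nonneg (1 + w))]
    have hNlo : (0:ℝ) ≤ 18 + 21*w + 2*(9*w - 8 - 8*s*w)*(1 + w)^2 := by
      nlinarith [mul_nonneg (by linarith : (0:ℝ) ≤ (9*w - 8 - 8*(s*w)) + 1) (sq_nonneg (1 + w))]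
    have hDlo : (9:ℝ)/5 ≤ 4*w*(1 - 2*s^2)*(1 + w)^2 := by
      have h1 : (9:ℝ)/5 ≤ 4*w*(1 - 2*s^2) := by nlinarith
      nlinarith [mul_nonneg (by linarith : (0:ℝ) ≤ 4*w*(1 - 2*s^2) - 9/5)
        (by linarith : (0:ℝ) ≤ (1 + w)^2 - 1)]
    rw [abs_div, abs_of_pos hD, div_le_iff₀ hD, abs_le]
    constructor <;> nlinarith
  calc |s^5 * ((18 + 21*w + 2*(9*w - 8 - 8*s*w)*(1 + w)^2) / (4*w*(1 - 2*s^2)*(1 + w)^2))|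
      = s^5 * |(18 + 21*w + 2*(9*w - 8 - 8*s*w)*(1 + w)^2) / (4*w*(1 - 2*s^2)*(1 + w)^2)| := by
        rw [abs_mul, abs_of_nonneg (le_of_lt (pow_pos hs 5))]
    _ ≤ s^5 * 100 := by
        exact mul_le_mul_of_nonneg_left hQ (le_of_lt (pow_pos hs 5))
    _ = 100 * s^5 := by ring
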